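/- Assume moment condition (C2) and let δ > 1. For m ∈ ℤ and n ≥ 1 set p^{(δ)}_{n,m} = Σ h_μ(ℓ), the sum over integers ℓ with 2|m|^δ < ℓ ≤ 2n and ℓ ≡ m (mod 2). Then for every absolutely summable sequence (c_m)_{m∈ℤ}, Σ_{m∈ℤ} c_m p^{(δ)}_{n,m} = ι_μ(2n) Σ_{m∈ℤ} c_m + o(ι_μ(2n)) as n → ∞. -/

import Mathlib

open MeasureTheory Filter Complex Asymptotics Topology
open scoped Classical

noncomputable section

/-- The moment function `m_ξ = ∫_0^∞ r^ξ dμ(r)`. -/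
def mom (μ : Measure ℝ) (ξ : ℝ) : ℝ := ∫ r in Set.Ioi (0:ℝ), r ^ ξ ∂μ

/-- `p^{(δ)}_{n,m} = Σ' h_μ(ℓ)`, sum over `ℓ` with `2|m|^δ < ℓ ≤ 2n` of the same parity
as `m`. -/
def pdel (h : ℝ → ℝ) (δ : ℝ) (n : ℕ) (m : ℤ) : ℝ :=
  ∑ l ∈ (Finset.range (2*n+1)).filter
      (fun l : ℕ => 2 * |(m:ℝ)| ^ δ < (l:ℝ) ∧ (l : ℤ) % 2 = m % 2), h l

lemma core_sum_integral
    (h : ℝ → ℝ) (ι : ℝ → ℝ) (γ : ℝ) (hγ : 1 < γ)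
    (hd : ∀ x : ℝ, 1 ≤ x → DifferentiableAt ℝ h x)
    (M : ℝ) (hM : ∀ x : ℝ, 1 ≤ x → |h x| ≤ M)
    (X0 : ℕ) (hX01 : 1 ≤ X0) (C1 : ℝ) (hC1 : 0 ≤ C1)
    (hd' : ∀ x : ℝ, (X0:ℝ) ≤ x → ‖deriv h x‖ ≤ C1 * x ^ (-γ))
    (hι : ∀ x, ι x = (1/2) * ∫ t in (1:ℝ)..x, h t) :
    ∃ C0 : ℝ, 0 ≤ C0 ∧ ∀ a : ℝ, 2 ≤ a → ∀ r n : ℕ, r < 2 → a ≤ 2*(n:ℝ) →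
      |(∑ ℓ ∈ (Finset.range (2*n+1)).filter (fun ℓ : ℕ => a < (ℓ:ℝ) ∧ ℓ % 2 = r), h ℓ)
        - (ι (2*(n:ℝ)) - ι a)| ≤ C0 := by
  have hM0 : 0 ≤ M := (abs_nonneg _).trans (hM 1 le_rfl)
  have hcont : ContinuousOn h (Set.Ici 1) := fun x hx => ((hd x hx).continuousAt).continuousWithinAt
  have hint : ∀ x y : ℝ, 1 ≤ x → 1 ≤ y → IntervalIntegrable h volume x y := by
    intro x y hx hy
    refine (hcont.mono ?_).intervalIntegrable
    intro t ht
    rcases Set.mem_uIcc.mp ht with ⟨h1, _⟩ | ⟨h1, _⟩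
    · exact le_trans hx h1
    · exact le_trans hy h1
  have ιdiff : ∀ x y : ℝ, 1 ≤ x → 1 ≤ y → ι y - ι x = (1/2) * ∫ t in x..y, h t := by
    intro x y hx hy
    rw [hι, hι, ← mul_sub]
    congr 1
    exact intervalIntegral.integral_interval_sub_left (hint 1 y le_rfl hy) (hint 1 x le_rfl hx)
  have ιabs : ∀ x y : ℝ, 1 ≤ x → 1 ≤ y → |ι y - ι x| ≤ M/2 * |y - x| := by
    intro x y hx hy
    rw [ιdiff x y hx hy, abs_mul]
    have h2 : |(1:ℝ)/2| = 1/2 := by norm_num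
    rw [h2]
    have hb : ‖∫ t in x..y, h t‖ ≤ M * |y - x| := by
      apply intervalIntegral.norm_integral_le_of_norm_le_const
      intro t ht
      rcases Set.mem_uIoc.mp ht with ⟨h1, _⟩ | ⟨h1, _⟩
      · exact hM t (le_of_lt (lt_of_le_of_lt hx h1))
      · exact hM t (le_of_lt (lt_of_le_of_lt hy h1))
    rw [Real.norm_eq_abs] at hb
    calc (1:ℝ)/2 * |∫ t in x..y, h t| ≤ 1/2 * (M * |y - x|) := by
          apply mul_le_mul_of_nonneg_left hb; norm_num
      _ = M/2 * |y - x| := by ring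
  -- the per-term error bound
  set g' : ℕ → ℝ := fun ℓ => if X0 + 2 ≤ ℓ then 2*C1*(((ℓ:ℝ)-2) ^ (-γ)) else 2*M with hg'
  have g'nonneg : ∀ ℓ : ℕ, 0 ≤ g' ℓ := by
    intro ℓ
    simp only [hg']
    split_ifs with hcase
    · have : (0:ℝ) ≤ ((ℓ:ℝ)-2) ^ (-γ) := by
        apply Real.rpow_nonneg
        have : (X0:ℝ) + 2 ≤ (ℓ:ℝ) := by exact_mod_cast hcase
        have : (1:ℝ) ≤ (X0:ℝ) := by exact_mod_cast hX01
        linarith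
      positivity
    · linarith
  have eb : ∀ ℓ : ℕ, 3 ≤ ℓ →
      |h ℓ - (1/2) * ∫ t in ((ℓ:ℝ)-2)..(ℓ:ℝ), h t| ≤ g' ℓ := by
    intro ℓ hℓ
    have h3ℓ : (3:ℝ) ≤ (ℓ:ℝ) := by exact_mod_cast hℓ
    have h1ℓ : (1:ℝ) ≤ (ℓ:ℝ)-2 := by linarith
    simp only [hg']
    split_ifs with hcase
    · -- MVT case
      have hXℓ : (X0:ℝ) + 2 ≤ (ℓ:ℝ) := by exact_mod_cast hcase
      have hX : (X0:ℝ) ≤ (ℓ:ℝ)-2 := by linarith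
      have hpos : (0:ℝ) < (ℓ:ℝ)-2 := by linarith
      set K := C1 * (((ℓ:ℝ)-2) ^ (-γ)) with hK
      have hK0 : 0 ≤ K := mul_nonneg hC1 (Real.rpow_nonneg (le_of_lt hpos) _)
      have hmvt : ∀ t ∈ Set.uIoc ((ℓ:ℝ)-2) (ℓ:ℝ), ‖h (ℓ:ℝ) - h t‖ ≤ K * 2 := by
        intro t ht
        have ht' : t ∈ Set.Icc ((ℓ:ℝ)-2) (ℓ:ℝ) := by
          rw [Set.uIoc_of_le (by linarith)] at ht
          exact ⟨le_of_lt ht.1, ht.2⟩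
        have hmvt' := Convex.norm_image_sub_le_of_norm_deriv_le (f := h)
          (s := Set.Icc ((ℓ:ℝ)-2) (ℓ:ℝ)) (C := K)
          (fun x hx => hd x (le_trans h1ℓ hx.1))
          (fun x hx => by
            refine le_trans (hd' x (le_trans hX hx.1)) ?_
            have hx2 : ((x:ℝ)) ^ (-γ) ≤ ((ℓ:ℝ)-2) ^ (-γ) :=
              Real.rpow_le_rpow_of_nonpos hpos hx.1 (by linarith)
            exact mul_le_mul_of_nonneg_left hx2 hC1)
          (convex_Icc _ _) ht' ⟨by linarith, le_refl _⟩
        refine le_trans hmvt' ?_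
        have : ‖(ℓ:ℝ) - t‖ ≤ 2 := by
          rw [Real.norm_eq_abs, _root_.abs_of_nonneg (by linarith [ht'.2])]
          linarith [ht'.1]
        exact mul_le_mul_of_nonneg_left this hK0
      have hrew : h (ℓ:ℝ) - (1/2) * ∫ t in ((ℓ:ℝ)-2)..(ℓ:ℝ), h t
          = (1/2) * ∫ t in ((ℓ:ℝ)-2)..(ℓ:ℝ), (h (ℓ:ℝ) - h t) := by
        rw [intervalIntegral.integral_sub intervalIntegrable_const
            (hint _ _ h1ℓ (by linarith)), intervalIntegral.integral_const]
        have : ((ℓ:ℝ) - ((ℓ:ℝ)-2)) = 2 := by ring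
        rw [this]
        simp only [smul_eq_mul]
        ring
      rw [hrew]
      have hb := intervalIntegral.norm_integral_le_of_norm_le_const (C := K * 2)
        (f := fun t => h (ℓ:ℝ) - h t) (a := (ℓ:ℝ)-2) (b := (ℓ:ℝ)) hmvt
      rw [Real.norm_eq_abs] at hb
      have habs : |(ℓ:ℝ) - ((ℓ:ℝ)-2)| = 2 := by
        rw [_root_.abs_of_nonneg] <;> ring_nf <;> norm_num
      rw [habs] at hb
      calc |(1:ℝ)/2 * ∫ t in ((ℓ:ℝ)-2)..(ℓ:ℝ), (h (ℓ:ℝ) - h t)|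
          = 1/2 * |∫ t in ((ℓ:ℝ)-2)..(ℓ:ℝ), (h (ℓ:ℝ) - h t)| := by
            rw [abs_mul]; norm_num
        _ ≤ 1/2 * (K * 2 * 2) := by
            apply mul_le_mul_of_nonneg_left hb; norm_num
        _ = 2*C1*(((ℓ:ℝ)-2) ^ (-γ)) := by rw [hK]; ring
    · -- crude case
      have hb : ‖∫ t in ((ℓ:ℝ)-2)..(ℓ:ℝ), h t‖ ≤ M * |(ℓ:ℝ) - ((ℓ:ℝ)-2)| := by
        apply intervalIntegral.norm_integral_le_of_norm_le_const
        intro t ht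
        rw [Set.uIoc_of_le (by linarith)] at ht
        exact hM t (le_of_lt (lt_of_le_of_lt h1ℓ ht.1))
      have habs : |(ℓ:ℝ) - ((ℓ:ℝ)-2)| = 2 := by
        rw [_root_.abs_of_nonneg] <;> ring_nf <;> norm_num
      rw [habs, Real.norm_eq_abs] at hb
      have h1 : |h (ℓ:ℝ)| ≤ M := hM _ (by linarith)
      calc |h (ℓ:ℝ) - (1/2) * ∫ t in ((ℓ:ℝ)-2)..(ℓ:ℝ), h t|
          ≤ |h (ℓ:ℝ)| + |(1/2) * ∫ t in ((ℓ:ℝ)-2)..(ℓ:ℝ), h t| := abs_sub _ _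
        _ ≤ M + 1/2 * (M * 2) := by
            rw [abs_mul]
            refine add_le_add h1 ?_
            have : |(1:ℝ)/2| = 1/2 := by norm_num
            rw [this]
            apply mul_le_mul_of_nonneg_left hb; norm_num
        _ = 2*M := by ring
  -- summability of g'
  have hg'sum : Summable g' := by
    rw [← summable_nat_add_iff (X0+2)]
    have hbase : Summable (fun ℓ : ℕ => 2*C1 * (((ℓ:ℝ)+1) ^ γ)⁻¹) := by
      apply Summable.mul_left
      have := (summable_nat_add_iff (f := fun n : ℕ => (((n:ℝ)) ^ γ)⁻¹) 1).2
        (Real.summable_nat_rpow_inv.2 hγ)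
      simpa using this
    apply Summable.of_nonneg_of_le (fun ℓ => g'nonneg _) _ hbase
    intro ℓ
    have hif : X0 + 2 ≤ ℓ + (X0+2) := by omega
    simp only [hg', if_pos hif]
    have h1 : (0:ℝ) < (ℓ:ℝ)+1 := by positivity
    have hX1 : (1:ℝ) ≤ (X0:ℝ) := by exact_mod_cast hX01
    have h2 : ((ℓ:ℝ)+1) ≤ ((ℓ + (X0+2) : ℕ):ℝ) - 2 := by push_cast; linarith
    have h3 := Real.rpow_le_rpow_of_nonpos h1 h2 (by linarith : -γ ≤ 0)
    rw [Real.rpow_neg (le_of_lt h1)] at h3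
    calc 2*C1*((((ℓ + (X0+2):ℕ):ℝ)-2) ^ (-γ)) ≤ 2*C1*((((ℓ:ℝ)+1)) ^ γ)⁻¹ := by
          apply mul_le_mul_of_nonneg_left h3 (by positivity)
      _ = 2*C1 * (((ℓ:ℝ)+1) ^ γ)⁻¹ := by ring
  set Ce := ∑' ℓ : ℕ, g' ℓ with hCe
  have hCe0 : 0 ≤ Ce := tsum_nonneg g'nonneg
  refine ⟨Ce + 2*M, by linarith, ?_⟩
  intro a ha r n hr han
  set q := ⌊a⌋₊ with hqdef
  have ha0 : (0:ℝ) ≤ a := by linarith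
  have hq2 : 2 ≤ q := Nat.le_floor (by exact_mod_cast ha)
  have hq2n : q ≤ 2*n := by
    have h1 : (q:ℝ) ≤ 2*(n:ℝ) := le_trans (Nat.floor_le ha0) han
    exact_mod_cast h1
  have hfloor : ∀ ℓ : ℕ, (a < (ℓ:ℝ)) ↔ q < ℓ := fun ℓ => (Nat.floor_lt ha0).symm
  set ℓ0 := if (q+1) % 2 = r then q+1 else q+2 with hℓ0def
  have hℓ0 : ℓ0 % 2 = r ∧ q < ℓ0 ∧ ℓ0 ≤ q + 2 := by
    simp only [hℓ0def]; split_ifs with hh <;> omega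
  set N := (2*n + 2 - ℓ0)/2 with hNdef
  have hset : (Finset.range (2*n+1)).filter (fun ℓ : ℕ => a < (ℓ:ℝ) ∧ ℓ % 2 = r)
      = (Finset.range N).image (fun k => ℓ0 + 2*k) := by
    ext ℓ
    simp only [Finset.mem_filter, Finset.mem_range, Finset.mem_image, hfloor ℓ]
    constructor
    · rintro ⟨h1, h2, h3⟩
      exact ⟨(ℓ - ℓ0)/2, by omega, by omega⟩
    · rintro ⟨k, hk, rfl⟩
      refine ⟨by omega, by omega, by omega⟩
  have hinj : ∀ x ∈ Finset.range N, ∀ y ∈ Finset.range N, ℓ0 + 2*x = ℓ0 + 2*y → x = y := by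
    intro x _ y _ hxy; omega
  set A : ℕ → ℝ := fun k => (ℓ0:ℝ) - 2 + 2*k with hAdef
  have hℓ03 : 3 ≤ ℓ0 := by omega
  have hℓ03' : (3:ℝ) ≤ (ℓ0:ℝ) := by exact_mod_cast hℓ03
  have hA1 : ∀ k : ℕ, (1:ℝ) ≤ A k := by
    intro k
    simp only [hAdef]
    have : (0:ℝ) ≤ (k:ℝ) := Nat.cast_nonneg k
    linarith
  have hAmono : ∀ j k : ℕ, j ≤ k → A j ≤ A k := by
    intro j k hjk
    simp only [hAdef]
    have : (j:ℝ) ≤ (k:ℝ) := by exact_mod_cast hjk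
    linarith
  have hadj : ∑ k ∈ Finset.range N, ∫ t in (A k)..(A (k+1)), h t
      = ∫ t in (A 0)..(A N), h t :=
    intervalIntegral.sum_integral_adjacent_intervals
      (fun k _ => hint _ _ (hA1 k) (hA1 (k+1)))
  have hcast : ∀ k : ℕ, ((ℓ0 + 2*k : ℕ):ℝ) = A (k+1) := by
    intro k; simp only [hAdef]; push_cast; ring
  have hcast2 : ∀ k : ℕ, ((ℓ0 + 2*k : ℕ):ℝ) - 2 = A k := by
    intro k; simp only [hAdef]; push_cast; ring
  have hterm : ∀ k ∈ Finset.range N,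
      |h (A (k+1)) - (1/2) * ∫ t in (A k)..(A (k+1)), h t| ≤ g' (ℓ0 + 2*k) := by
    intro k _
    have h3 : 3 ≤ ℓ0 + 2*k := by omega
    have := eb (ℓ0 + 2*k) h3
    rwa [hcast2 k, hcast k] at this
  have hsum1 : (∑ ℓ ∈ (Finset.range (2*n+1)).filter (fun ℓ : ℕ => a < (ℓ:ℝ) ∧ ℓ % 2 = r), h ℓ)
      = ∑ k ∈ Finset.range N, h (A (k+1)) := by
    rw [hset, Finset.sum_image hinj]
    exact Finset.sum_congr rfl (fun k _ => by rw [hcast k])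
  have key1 : |(∑ k ∈ Finset.range N, h (A (k+1))) - (1/2) * ∫ t in (A 0)..(A N), h t|
      ≤ ∑ k ∈ Finset.range N, g' (ℓ0 + 2*k) := by
    rw [← hadj, Finset.mul_sum, ← Finset.sum_sub_distrib]
    exact (Finset.abs_sum_le_sum_abs _ _).trans (Finset.sum_le_sum hterm)
  have key2 : ∑ k ∈ Finset.range N, g' (ℓ0 + 2*k) ≤ Ce := by
    rw [show (∑ k ∈ Finset.range N, g' (ℓ0 + 2*k))
        = ∑ ℓ ∈ (Finset.range N).image (fun k => ℓ0 + 2*k), g' ℓ from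
      (Finset.sum_image hinj).symm]
    exact Summable.sum_le_tsum _ (fun i _ => g'nonneg i) hg'sum
  -- endpoint estimates
  have hLnat : ℓ0 + 2*N - 2 ≤ 2*n ∧ 2*n ≤ ℓ0 + 2*N := by
    constructor <;> omega
  have hAN : A N = ((ℓ0 + 2*N - 2 : ℕ):ℝ) := by
    have h2 : 2 ≤ ℓ0 + 2*N := by omega
    rw [Nat.cast_sub h2]
    simp only [hAdef]; push_cast; ring
  have hAN1 : (1:ℝ) ≤ A N := hA1 N
  have hANle : A N ≤ 2*(n:ℝ) ∧ 2*(n:ℝ) ≤ A N + 2 := by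
    constructor
    · rw [hAN]
      have := hLnat.1
      exact_mod_cast Nat.cast_le.mpr this
    · rw [hAN]
      have h2 : 2 ≤ ℓ0 + 2*N := by omega
      have := hLnat.2
      have hc : (2*n : ℝ) ≤ ((ℓ0 + 2*N : ℕ):ℝ) := by exact_mod_cast this
      rw [Nat.cast_sub h2] at *
      push_cast at hc ⊢
      linarith
  have hend1 : |ι (2*(n:ℝ)) - ι (A N)| ≤ M := by
    have := ιabs (A N) (2*(n:ℝ)) hAN1 (by linarith)
    have habs : |2*(n:ℝ) - A N| ≤ 2 := by
      rw [_root_.abs_of_nonneg (by linarith [hANle.1])]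
      linarith [hANle.2]
    calc |ι (2*(n:ℝ)) - ι (A N)| ≤ M/2 * |2*(n:ℝ) - A N| := this
      _ ≤ M/2 * 2 := by apply mul_le_mul_of_nonneg_left habs (by linarith)
      _ = M := by ring
  have hA0 : A 0 = (ℓ0:ℝ) - 2 := by simp [hAdef]
  have hA01 : (1:ℝ) ≤ A 0 := hA1 0
  have haq : (q:ℝ) ≤ a := Nat.floor_le ha0
  have haq2 : a < (q:ℝ) + 1 := Nat.lt_floor_add_one a
  have hℓ0le : (ℓ0:ℝ) ≤ (q:ℝ) + 2 := by exact_mod_cast hℓ0.2.2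
  have hℓ0gt : (q:ℝ) < (ℓ0:ℝ) := by exact_mod_cast hℓ0.2.1
  have hend2 : |ι a - ι (A 0)| ≤ M := by
    have hA0a : A 0 ≤ a := by rw [hA0]; linarith
    have := ιabs (A 0) a hA01 (by linarith)
    have habs : |a - A 0| ≤ 2 := by
      rw [_root_.abs_of_nonneg (by linarith)]
      rw [hA0]
      have : (q:ℝ) + 1 ≤ (ℓ0:ℝ) := by exact_mod_cast hℓ0.2.1
      linarith
    calc |ι a - ι (A 0)| ≤ M/2 * |a - A 0| := this
      _ ≤ M/2 * 2 := by apply mul_le_mul_of_nonneg_left habs (by linarith)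
      _ = M := by ring
  have hmid : ι (A N) - ι (A 0) = (1/2) * ∫ t in (A 0)..(A N), h t :=
    ιdiff (A 0) (A N) hA01 hAN1
  rw [hsum1]
  have hdecomp : (∑ k ∈ Finset.range N, h (A (k+1))) - (ι (2*(n:ℝ)) - ι a)
      = ((∑ k ∈ Finset.range N, h (A (k+1))) - (1/2) * ∫ t in (A 0)..(A N), h t)
        - (ι (2*(n:ℝ)) - ι (A N)) + (ι a - ι (A 0)) := by
    rw [← hmid]; ring
  rw [hdecomp]
  have hstep : ∀ x y z : ℝ, |x - y + z| ≤ |x| + |y| + |z| := by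
    intro x y z
    calc |x - y + z| ≤ |x - y| + |z| := abs_add_le _ _
      _ ≤ |x| + |y| + |z| := by linarith [abs_sub x y]
  refine le_trans (hstep _ _ _) ?_
  have := key1.trans key2
  linarith

/-- Under moment condition (C2) and `δ > 1`, for every absolutely summable
sequence `(c_m)`, `Σ_m c_m p^{(δ)}_{n,m} = ι_μ(2n) Σ_m c_m + o(ι_μ(2n))` as `n → ∞`. -/
theorem weighted_pdel_asymptotics
    (μ : Measure ℝ)
    (hsupp : μ (Set.Iic (0:ℝ)) = 0)
    (hpos : μ (Set.Ioi (0:ℝ)) ≠ 0)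
    (hmom : ∀ ξ : ℝ, 0 ≤ ξ → IntegrableOn (fun r : ℝ => r ^ ξ) (Set.Ioi (0:ℝ)) μ)
    -- moment condition (C2):
    (h : ℝ → ℝ) (β γ ϱ : ℝ)
    (hβ₁ : 1/2 < β) (hβ₂ : β ≤ 1) (hγ : 1 < γ) (hϱ : 1 < ϱ)
    (hh_nonneg : ∀ ξ : ℝ, 0 < ξ → 0 ≤ h ξ)
    (hh_diff : ∀ ξ : ℝ, 0 < ξ → DifferentiableAt ℝ h ξ)
    (hC2 : (fun ξ => deriv (deriv fun t => Real.log (mom μ t)) ξ - h ξ)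
              =O[atTop] fun ξ : ℝ => ξ ^ (-ϱ))
    (hhO : h =O[atTop] fun ξ : ℝ => ξ ^ (-β))
    (hh'O : deriv h =O[atTop] fun ξ : ℝ => ξ ^ (-γ))
    (ι : ℝ → ℝ) (hι_def : ∀ x : ℝ, ι x = (1/2) * ∫ t in (1:ℝ)..x, h t)
    (hι_top : Tendsto ι atTop atTop)
    (δ : ℝ) (hδ : 1 < δ)
    (c : ℤ → ℂ) (hc : Summable fun m : ℤ => ‖c m‖) :
    (fun n : ℕ => (∑' m : ℤ, c m * (pdel h δ n m : ℂ)) - (ι (2*n) : ℂ) * ∑' m : ℤ, c m)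
      =o[atTop] fun n : ℕ => ι (2*n) := by
  have hδ0 : (0:ℝ) < δ := by linarith
  have hd : ∀ x : ℝ, 1 ≤ x → DifferentiableAt ℝ h x := fun x hx => hh_diff x (by linarith)
  have hcont : ContinuousOn h (Set.Ici 1) := fun x hx =>
    ((hd x hx).continuousAt).continuousWithinAt
  -- global bound M for |h| on [1, ∞)
  obtain ⟨C2, hC2pos, hbig⟩ := hhO.exists_pos
  obtain ⟨X1, hX1⟩ := eventually_atTop.mp hbig.bound
  obtain ⟨M1, hM1⟩ := (isCompact_Icc (a := (1:ℝ)) (b := max 1 X1)).exists_bound_of_continuousOn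
    (hcont.mono (fun x hx => hx.1))
  set M := max C2 M1 with hMdef
  have hM : ∀ x : ℝ, 1 ≤ x → |h x| ≤ M := by
    intro x hx
    by_cases hx2 : x ≤ max 1 X1
    · exact le_trans (hM1 x ⟨hx, hx2⟩) (le_max_right _ _)
    · have hxX1 : X1 ≤ x := le_trans (le_max_right 1 X1) (le_of_not_ge hx2)
      have hb := hX1 x hxX1
      have h1 : ‖x ^ (-β)‖ ≤ 1 := by
        rw [Real.norm_eq_abs, _root_.abs_of_nonneg (Real.rpow_nonneg (by linarith) _)]
        exact Real.rpow_le_one_of_one_le_of_nonpos hx (by linarith)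
      calc |h x| = ‖h x‖ := (Real.norm_eq_abs _).symm
        _ ≤ C2 * ‖x ^ (-β)‖ := hb
        _ ≤ C2 * 1 := mul_le_mul_of_nonneg_left h1 (le_of_lt hC2pos)
        _ ≤ M := by rw [mul_one]; exact le_max_left _ _
  -- bound for deriv h
  obtain ⟨C1, hC1pos, h'big⟩ := hh'O.exists_pos
  obtain ⟨X0r, hX0r⟩ := eventually_atTop.mp h'big.bound
  set X0 : ℕ := max 1 ⌈X0r⌉₊ with hX0def
  have hX01 : 1 ≤ X0 := le_max_left _ _
  have hd' : ∀ x : ℝ, (X0:ℝ) ≤ x → ‖deriv h x‖ ≤ C1 * x ^ (-γ) := by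
    intro x hx
    have hx1 : (1:ℝ) ≤ x := le_trans (by exact_mod_cast Nat.one_le_cast.mpr hX01) hx
    have hxr : X0r ≤ x := by
      refine le_trans (Nat.le_ceil X0r) (le_trans ?_ hx)
      exact_mod_cast le_max_right 1 ⌈X0r⌉₊
    have hb := hX0r x hxr
    rwa [Real.norm_eq_abs (x ^ (-γ)), _root_.abs_of_nonneg (Real.rpow_nonneg (by linarith) _)] at hb
  obtain ⟨C0, hC00, hcore⟩ := core_sum_integral h ι γ hγ hd M hM X0 hX01 C1
    (le_of_lt hC1pos) hd' hι_def
  -- basic ι facts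
  have hint : ∀ x y : ℝ, 1 ≤ x → 1 ≤ y → IntervalIntegrable h volume x y := by
    intro x y hx hy
    refine (hcont.mono ?_).intervalIntegrable
    intro t ht
    rcases Set.mem_uIcc.mp ht with ⟨h1, _⟩ | ⟨h1, _⟩
    · exact le_trans hx h1
    · exact le_trans hy h1
  have ιdiff : ∀ x y : ℝ, 1 ≤ x → 1 ≤ y → ι y - ι x = (1/2) * ∫ t in x..y, h t := by
    intro x y hx hy
    rw [hι_def, hι_def, ← mul_sub]
    congr 1
    exact intervalIntegral.integral_interval_sub_left (hint 1 y le_rfl hy) (hint 1 x le_rfl hx)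
  have ιmono : ∀ x y : ℝ, 1 ≤ x → x ≤ y → ι x ≤ ι y := by
    intro x y hx hxy
    have h0 : 0 ≤ ι y - ι x := by
      rw [ιdiff x y hx (by linarith)]
      have : 0 ≤ ∫ t in x..y, h t :=
        intervalIntegral.integral_nonneg hxy (fun u hu => hh_nonneg u (by linarith [hu.1]))
      linarith
    linarith
  have ι1 : ι 1 = 0 := by rw [hι_def]; simp
  have ιnonneg : ∀ x : ℝ, 1 ≤ x → 0 ≤ ι x := by
    intro x hx; rw [← ι1]; exact ιmono 1 x le_rfl hx
  -- rewrite pdel with ℕ-parity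
  have hpdel : ∀ (n : ℕ) (m : ℤ), pdel h δ n m =
      ∑ ℓ ∈ (Finset.range (2*n+1)).filter
        (fun ℓ : ℕ => 2 * |(m:ℝ)| ^ δ < (ℓ:ℝ) ∧ ℓ % 2 = (m % 2).toNat), h ℓ := by
    intro n m
    unfold pdel
    congr 1
    apply Finset.filter_congr
    intro ℓ _
    have : ((ℓ:ℤ) % 2 = m % 2) ↔ (ℓ % 2 = (m % 2).toNat) := by omega
    exact and_congr Iff.rfl this
  set am : ℤ → ℝ := fun m => max 2 (2 * |(m:ℝ)| ^ δ) with hamdef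
  have ham2 : ∀ m : ℤ, 2 ≤ am m := fun m => le_max_left _ _
  have hamne : ∀ m : ℤ, m ≠ 0 → am m = 2 * |(m:ℝ)| ^ δ := by
    intro m hm
    have h1 : (1:ℝ) ≤ |(m:ℝ)| := by
      rw [← Int.cast_abs]
      exact_mod_cast Int.one_le_abs (by exact_mod_cast hm)
    have h2 : (1:ℝ) ≤ |(m:ℝ)| ^ δ := Real.one_le_rpow h1 (le_of_lt hδ0)
    simp only [hamdef]
    exact max_eq_right (by linarith)
  have ham0 : am (0:ℤ) = 2 := by
    simp only [hamdef]
    norm_num [Real.zero_rpow (ne_of_gt hδ0)]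
  have hrlt : ∀ m : ℤ, (m % 2).toNat < 2 := by intro m; omega
  have hh2 : 0 ≤ h 2 := hh_nonneg 2 (by norm_num)
  -- KEY estimate
  have KEY : ∀ (m : ℤ) (n : ℕ), 1 ≤ n → am m ≤ 2*(n:ℝ) →
      |pdel h δ n m - (ι (2*(n:ℝ)) - ι (am m))| ≤ C0 + h 2 := by
    intro m n hn h2n
    by_cases hm : m = 0
    · subst hm
      rw [hpdel, ham0]
      have hzero : 2 * |((0:ℤ):ℝ)| ^ δ = 0 := by
        norm_num [Real.zero_rpow (ne_of_gt hδ0)]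
      have htoNat : ((0:ℤ) % 2).toNat = 0 := by norm_num
      have hsetid : (Finset.range (2*n+1)).filter
          (fun ℓ : ℕ => 2 * |((0:ℤ):ℝ)| ^ δ < (ℓ:ℝ) ∧ ℓ % 2 = ((0:ℤ) % 2).toNat)
          = insert 2 ((Finset.range (2*n+1)).filter
              (fun ℓ : ℕ => (2:ℝ) < (ℓ:ℝ) ∧ ℓ % 2 = 0)) := by
        ext ℓ
        simp only [Finset.mem_filter, Finset.mem_range, Finset.mem_insert, hzero, htoNat]
        have e1 : ((0:ℝ) < (ℓ:ℝ)) ↔ 0 < ℓ := by exact_mod_cast Nat.cast_pos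
        have e2 : ((2:ℝ) < (ℓ:ℝ)) ↔ 2 < ℓ := by
          rw [show ((2:ℝ)) = ((2:ℕ):ℝ) by norm_num, Nat.cast_lt]
        rw [e1, e2]
        omega
      rw [hsetid, Finset.sum_insert (by simp)]
      have hc := hcore 2 le_rfl 0 n (by norm_num) (by rwa [ham0] at h2n)
      have : |(∑ ℓ ∈ (Finset.range (2*n+1)).filter
          (fun ℓ : ℕ => (2:ℝ) < (ℓ:ℝ) ∧ ℓ % 2 = 0), h ℓ) - (ι (2*(n:ℝ)) - ι 2)| ≤ C0 := hc
      calc |h 2 + (∑ ℓ ∈ (Finset.range (2*n+1)).filter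
            (fun ℓ : ℕ => (2:ℝ) < (ℓ:ℝ) ∧ ℓ % 2 = 0), h ℓ) - (ι (2*(n:ℝ)) - ι 2)|
          ≤ |(∑ ℓ ∈ (Finset.range (2*n+1)).filter
            (fun ℓ : ℕ => (2:ℝ) < (ℓ:ℝ) ∧ ℓ % 2 = 0), h ℓ) - (ι (2*(n:ℝ)) - ι 2)| + |h 2| := by
            rw [add_sub_assoc]
            exact (abs_add_le _ _).trans (by rw [add_comm])
        _ ≤ C0 + h 2 := by
            rw [_root_.abs_of_nonneg hh2]
            linarith
    · rw [hpdel, hamne m hm]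
      exact le_trans (hcore (2 * |(m:ℝ)| ^ δ) (by rw [← hamne m hm]; exact ham2 m)
        ((m % 2).toNat) n (hrlt m) (by rw [← hamne m hm]; exact h2n)) (by linarith)
  have hpdel_nonneg : ∀ (n : ℕ) (m : ℤ), 0 ≤ pdel h δ n m := by
    intro n m
    unfold pdel
    apply Finset.sum_nonneg
    intro ℓ hℓ
    rw [Finset.mem_filter] at hℓ
    have : (0:ℝ) ≤ 2 * |(m:ℝ)| ^ δ := by positivity
    exact hh_nonneg _ (lt_of_le_of_lt this hℓ.2.1)
  -- uniform bound
  set K := C0 + h 2 with hKdef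
  have hK0 : 0 ≤ K := by simp only [hKdef]; linarith
  have UB : ∀ (m : ℤ) (n : ℕ), 1 ≤ n → |pdel h δ n m - ι (2*(n:ℝ))| ≤ ι (2*(n:ℝ)) + K := by
    intro m n hn
    have hn1 : (1:ℝ) ≤ (n:ℝ) := by exact_mod_cast hn
    have h2n1 : (1:ℝ) ≤ 2*(n:ℝ) := by linarith
    have hι2n : 0 ≤ ι (2*(n:ℝ)) := ιnonneg _ h2n1
    by_cases hcase : am m ≤ 2*(n:ℝ)
    · have hkey := KEY m n hn hcase
      have hιam0 : 0 ≤ ι (am m) := ιnonneg _ (by linarith [ham2 m])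
      rw [abs_le] at hkey ⊢
      constructor
      · have := hpdel_nonneg n m
        linarith
      · have hιm : ι (am m) ≤ ι (2*(n:ℝ)) := ιmono _ _ (by linarith [ham2 m]) hcase
        linarith [hkey.2]
    · have hm0 : m ≠ 0 := by
        intro hm; rw [hm, ham0] at hcase; linarith
      have hz : pdel h δ n m = 0 := by
        unfold pdel
        rw [Finset.filter_false_of_mem, Finset.sum_empty]
        intro ℓ hℓ
        rw [Finset.mem_range] at hℓ
        intro hcond
        have h1 : (ℓ:ℝ) ≤ 2*(n:ℝ) := by exact_mod_cast Nat.lt_succ_iff.mp hℓ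
        rw [hamne m hm0] at hcase
        push_neg at hcase
        linarith [hcond.1]
      rw [hz, zero_sub, abs_neg, _root_.abs_of_nonneg hι2n]
      linarith
  -- ι(2n) → ∞
  have h2natop : Tendsto (fun n : ℕ => ι (2*(n:ℝ))) atTop atTop :=
    hι_top.comp ((tendsto_natCast_atTop_atTop (R := ℝ)).const_mul_atTop (by norm_num))
  -- pointwise convergence
  have PT : ∀ m : ℤ, Tendsto (fun n : ℕ =>
      (pdel h δ n m - ι (2*(n:ℝ))) / ι (2*(n:ℝ))) atTop (𝓝 0) := by
    intro m
    set B := K + ι (am m) with hBdef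
    have hB : ∀ᶠ n : ℕ in atTop, |pdel h δ n m - ι (2*(n:ℝ))| ≤ B := by
      filter_upwards [eventually_ge_atTop 1, eventually_ge_atTop ⌈am m⌉₊] with n hn1 hn2
      have hcast : am m ≤ (n:ℝ) := le_trans (Nat.le_ceil _) (by exact_mod_cast hn2)
      have h2n : am m ≤ 2*(n:ℝ) := by
        have hn0 : (0:ℝ) ≤ (n:ℝ) := Nat.cast_nonneg n
        linarith
      have hkey := KEY m n hn1 h2n
      have hιam0 : 0 ≤ ι (am m) := ιnonneg _ (by linarith [ham2 m])
      calc |pdel h δ n m - ι (2*(n:ℝ))|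
          ≤ |pdel h δ n m - (ι (2*(n:ℝ)) - ι (am m))| + |ι (am m)| := by
            have : pdel h δ n m - ι (2*(n:ℝ))
                = (pdel h δ n m - (ι (2*(n:ℝ)) - ι (am m))) + (- ι (am m)) := by ring
            rw [this]
            exact (abs_add_le _ _).trans (by rw [abs_neg])
        _ ≤ K + ι (am m) := by rw [_root_.abs_of_nonneg hιam0]; linarith
    apply squeeze_zero_norm' (a := fun n : ℕ => B / ι (2*(n:ℝ)))
      ?_ (tendsto_const_nhds.div_atTop h2natop)
    filter_upwards [hB, h2natop.eventually_ge_atTop 1] with n hBn hι1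
    rw [Real.norm_eq_abs, abs_div, _root_.abs_of_nonneg (by linarith : (0:ℝ) ≤ ι (2*(n:ℝ)))]
    exact div_le_div_of_nonneg_right hBn (by linarith)
  -- final little-o argument
  have hcc : Summable c := Summable.of_norm hc
  rw [isLittleO_iff]
  intro ε hε
  set D : ℕ → ℤ → ℂ := fun n m =>
    c m * ((((pdel h δ n m - ι (2*(n:ℝ))) / ι (2*(n:ℝ))) : ℝ) : ℂ) with hDdef
  have Dlim : Tendsto (fun n => ∑' m : ℤ, D n m) atTop (𝓝 0) := by
    have hsum : Summable (fun m : ℤ => ‖c m‖ * (1 + K)) := hc.mul_right _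
    have hptw : ∀ m : ℤ, Tendsto (fun n => D n m) atTop (𝓝 0) := by
      intro m
      have h1 : Tendsto (fun n : ℕ =>
          ((((pdel h δ n m - ι (2*(n:ℝ))) / ι (2*(n:ℝ))) : ℝ) : ℂ))
          atTop (𝓝 ((0:ℝ):ℂ)) := (Complex.continuous_ofReal.tendsto _).comp (PT m)
      have h2 := h1.const_mul (c m)
      simpa [hDdef] using h2
    have hbnd : ∀ᶠ n : ℕ in atTop, ∀ m : ℤ, ‖D n m‖ ≤ ‖c m‖ * (1 + K) := by
      filter_upwards [h2natop.eventually_ge_atTop 1, eventually_ge_atTop 1] with n hι1 hn1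
      intro m
      have hub := UB m n hn1
      have hι0 : (0:ℝ) ≤ ι (2*(n:ℝ)) := by linarith
      have hq : |(pdel h δ n m - ι (2*(n:ℝ))) / ι (2*(n:ℝ))| ≤ 1 + K := by
        rw [abs_div, _root_.abs_of_nonneg hι0, div_le_iff₀ (by linarith)]
        nlinarith [hub]
      calc ‖D n m‖ = ‖c m‖ * |(pdel h δ n m - ι (2*(n:ℝ))) / ι (2*(n:ℝ))| := by
            rw [hDdef]; rw [norm_mul, Complex.norm_real, Real.norm_eq_abs]
        _ ≤ ‖c m‖ * (1 + K) := mul_le_mul_of_nonneg_left hq (norm_nonneg _)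
    have hmain := tendsto_tsum_of_dominated_convergence (f := D) (g := fun _ => (0:ℂ))
      hsum hptw hbnd
    simpa using hmain
  have hDev : ∀ᶠ n : ℕ in atTop, ‖∑' m : ℤ, D n m‖ ≤ ε := by
    have := (NormedAddCommGroup.tendsto_nhds_zero.mp Dlim) ε hε
    exact this.mono (fun n hn => le_of_lt hn)
  filter_upwards [hDev, h2natop.eventually_ge_atTop 1, eventually_ge_atTop 1]
    with n hDn hι1 hn1
  have hι0 : (0:ℝ) < ι (2*(n:ℝ)) := by linarith
  have hιne : ((ι (2*(n:ℝ)) : ℝ) : ℂ) ≠ 0 := Complex.ofReal_ne_zero.mpr (ne_of_gt hι0)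
  have hsum1 : Summable (fun m : ℤ => c m * ((pdel h δ n m : ℝ) : ℂ)) := by
    apply Summable.of_norm_bounded (hc.mul_right (2 * ι (2*(n:ℝ)) + K))
    intro m
    rw [norm_mul, Complex.norm_real, Real.norm_eq_abs]
    refine mul_le_mul_of_nonneg_left ?_ (norm_nonneg _)
    have hub := abs_le.mp (UB m n hn1)
    have hnn := hpdel_nonneg n m
    rw [_root_.abs_of_nonneg hnn]
    linarith [hub.2]
  have hsum2 : Summable (fun m : ℤ => c m * ((ι (2*(n:ℝ)) : ℝ) : ℂ)) := hcc.mul_right _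
  have e : ∀ m : ℤ, ((ι (2*(n:ℝ)) : ℝ) : ℂ) * D n m
      = c m * ((pdel h δ n m : ℝ) : ℂ) - c m * ((ι (2*(n:ℝ)) : ℝ) : ℂ) := by
    intro m
    rw [hDdef]
    push_cast
    field_simp
  have ident : (∑' m : ℤ, c m * ((pdel h δ n m : ℝ) : ℂ))
      - ((ι (2*(n:ℝ)) : ℝ) : ℂ) * (∑' m : ℤ, c m)
      = ((ι (2*(n:ℝ)) : ℝ) : ℂ) * ∑' m : ℤ, D n m := by
    rw [show ((ι (2*(n:ℝ)) : ℝ) : ℂ) * (∑' m : ℤ, c m)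
        = ∑' m : ℤ, c m * ((ι (2*(n:ℝ)) : ℝ) : ℂ) by rw [tsum_mul_right, mul_comm]]
    rw [← Summable.tsum_sub hsum1 hsum2, ← tsum_mul_left]
    exact tsum_congr (fun m => (e m).symm)
  calc ‖(∑' m : ℤ, c m * ((pdel h δ n m : ℝ) : ℂ))
        - ((ι (2*(n:ℝ)) : ℝ) : ℂ) * (∑' m : ℤ, c m)‖
      = ‖((ι (2*(n:ℝ)) : ℝ) : ℂ)‖ * ‖∑' m : ℤ, D n m‖ := by rw [ident, norm_mul]
    _ ≤ ‖ι (2*(n:ℝ))‖ * ε := by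
        rw [Complex.norm_real]
        exact mul_le_mul_of_nonneg_left hDn (norm_nonneg _)
    _ = ε * ‖ι (2*(n:ℝ))‖ := mul_comm _ _


end
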